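/- If two pairs of coefficients (μ₁,γ₁) and (μ₂,γ₂) satisfy the two potential identities ω²γ₁μ₁ + (Δ√μ₁)/√μ₁ = ω²γ₂μ₂ + (Δ√μ₂)/√μ₂ and ω²γ₁μ₁ + (Δ√γ₁)/√γ₁ = ω²γ₂μ₂ + (Δ√γ₂)/√γ₂ on Ω, then the pair r = (√μ₁ - √μ₂, √γ₁ - √γ₂) satisfies a linear second-order elliptic system Δr + A·∇r + B·r = 0 on Ω for some matrix-valued functions A₁, A₂, B with locally bounded entries built from μⱼ, γⱼ and their derivatives. -/

import Mathlib

open Complex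

noncomputable def pd1 (f : ℝ × ℝ → ℂ) : ℝ × ℝ → ℂ := fun x => fderiv ℝ f x (1, 0)
noncomputable def pd2 (f : ℝ × ℝ → ℂ) : ℝ × ℝ → ℂ := fun x => fderiv ℝ f x (0, 1)
noncomputable def lap (f : ℝ × ℝ → ℂ) : ℝ × ℝ → ℂ := fun x => pd1 (pd1 f) x + pd2 (pd2 f) x

/-- The square root `√μ` of a positive real coefficient, viewed in `ℂ`. -/
noncomputable def smu (μ : ℝ × ℝ → ℝ) : ℝ × ℝ → ℂ := fun x => (Real.sqrt (μ x) : ℂ)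

/-- The principal square root `√γ` of a complex coefficient (well defined for
`Re γ > 0`). -/
noncomputable def sga (γ : ℝ × ℝ → ℂ) : ℝ × ℝ → ℂ := fun x => γ x ^ ((1 : ℂ) / 2)

lemma pd_contDiffAt {f : ℝ × ℝ → ℂ} {x : ℝ × ℝ} {n : ℕ} (v : ℝ × ℝ)
    (hf : ContDiffAt ℝ (n + 1) f x) :
    ContDiffAt ℝ n (fun y => fderiv ℝ f y v) x := by
  have h : ContDiffAt ℝ n (fderiv ℝ f) x := hf.fderiv_right (by norm_cast)
  exact (ContinuousLinearMap.apply ℝ ℂ v).contDiff.contDiffAt.comp x h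

lemma continuousAt_lap {f : ℝ × ℝ → ℂ} {x : ℝ × ℝ} (hf : ContDiffAt ℝ 5 f x) :
    ContinuousAt (lap f) x := by
  have hf' : ContDiffAt ℝ ((4 : ℕ) + 1) f x := by exact_mod_cast hf
  have h1 : ContDiffAt ℝ 4 (pd1 f) x := pd_contDiffAt (1, 0) hf'
  have h2 : ContDiffAt ℝ 4 (pd2 f) x := pd_contDiffAt (0, 1) hf'
  have h1' : ContDiffAt ℝ ((3 : ℕ) + 1) (pd1 f) x := by exact_mod_cast h1
  have h2' : ContDiffAt ℝ ((3 : ℕ) + 1) (pd2 f) x := by exact_mod_cast h2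
  have c1 : ContDiffAt ℝ 3 (pd1 (pd1 f)) x := pd_contDiffAt (1, 0) h1'
  have c2 : ContDiffAt ℝ 3 (pd2 (pd2 f)) x := pd_contDiffAt (0, 1) h2'
  exact c1.continuousAt.add c2.continuousAt

lemma lap_sub {f g : ℝ × ℝ → ℂ} {x : ℝ × ℝ}
    (hf : ContDiffAt ℝ 5 f x) (hg : ContDiffAt ℝ 5 g x) :
    lap (fun y => f y - g y) x = lap f x - lap g x := by
  have hf2 : ∀ᶠ y in nhds x, ContDiffAt ℝ 5 f y := hf.eventually (by simp)
  have hg2 : ∀ᶠ y in nhds x, ContDiffAt ℝ 5 g y := hg.eventually (by simp)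
  have hev1 : pd1 (fun y => f y - g y) =ᶠ[nhds x] fun y => pd1 f y - pd1 g y := by
    filter_upwards [hf2, hg2] with y hfy hgy
    simp only [pd1, fderiv_fun_sub (hfy.differentiableAt (by norm_num))
      (hgy.differentiableAt (by norm_num)), ContinuousLinearMap.sub_apply]
  have hev2 : pd2 (fun y => f y - g y) =ᶠ[nhds x] fun y => pd2 f y - pd2 g y := by
    filter_upwards [hf2, hg2] with y hfy hgy
    simp only [pd2, fderiv_fun_sub (hfy.differentiableAt (by norm_num))
      (hgy.differentiableAt (by norm_num)), ContinuousLinearMap.sub_apply]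
  have hf5 : ContDiffAt ℝ ((1 : ℕ) + 1) f x := by exact_mod_cast hf.of_le (by norm_num)
  have hg5 : ContDiffAt ℝ ((1 : ℕ) + 1) g x := by exact_mod_cast hg.of_le (by norm_num)
  have d1f : DifferentiableAt ℝ (pd1 f) x :=
    (pd_contDiffAt (1, 0) hf5).differentiableAt (by norm_num)
  have d1g : DifferentiableAt ℝ (pd1 g) x :=
    (pd_contDiffAt (1, 0) hg5).differentiableAt (by norm_num)
  have d2f : DifferentiableAt ℝ (pd2 f) x :=
    (pd_contDiffAt (0, 1) hf5).differentiableAt (by norm_num)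
  have d2g : DifferentiableAt ℝ (pd2 g) x :=
    (pd_contDiffAt (0, 1) hg5).differentiableAt (by norm_num)
  have e1 : pd1 (pd1 (fun y => f y - g y)) x = pd1 (pd1 f) x - pd1 (pd1 g) x := by
    show fderiv ℝ (pd1 fun y => f y - g y) x (1, 0) = _
    rw [hev1.fderiv_eq, fderiv_fun_sub d1f d1g]
    simp [pd1, ContinuousLinearMap.sub_apply]
  have e2 : pd2 (pd2 (fun y => f y - g y)) x = pd2 (pd2 f) x - pd2 (pd2 g) x := by
    show fderiv ℝ (pd2 fun y => f y - g y) x (0, 1) = _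
    rw [hev2.fderiv_eq, fderiv_fun_sub d2f d2g]
    simp [pd2, ContinuousLinearMap.sub_apply]
  simp only [lap, e1, e2]
  ring

/-- If the two Schrödinger potentials built from `(μ₁,γ₁)` and `(μ₂,γ₂)` agree, then
`r = (√μ₁ - √μ₂, √γ₁ - √γ₂)` solves a linear second-order system
`Δr + A₁∂₁r + A₂∂₂r + Br = 0` with locally bounded matrix coefficients. -/
theorem difference_satisfies_elliptic_system
    (Ω : Set (ℝ × ℝ)) (hΩ : IsOpen Ω) (hΩb : Bornology.IsBounded Ω)
    (ω : ℝ) (hω : ω ≠ 0)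
    (μ₁ μ₂ ε₁ ε₂ σ₁ σ₂ : ℝ × ℝ → ℝ)
    (hμ₁ : ContDiffOn ℝ 5 μ₁ (closure Ω)) (hμ₂ : ContDiffOn ℝ 5 μ₂ (closure Ω))
    (hε₁ : ContDiffOn ℝ 5 ε₁ (closure Ω)) (hε₂ : ContDiffOn ℝ 5 ε₂ (closure Ω))
    (hσ₁ : ContDiffOn ℝ 5 σ₁ (closure Ω)) (hσ₂ : ContDiffOn ℝ 5 σ₂ (closure Ω))
    (hμ₁pos : ∀ x ∈ closure Ω, 0 < μ₁ x) (hμ₂pos : ∀ x ∈ closure Ω, 0 < μ₂ x)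
    (hε₁pos : ∀ x ∈ closure Ω, 0 < ε₁ x) (hε₂pos : ∀ x ∈ closure Ω, 0 < ε₂ x)
    (γ₁ γ₂ : ℝ × ℝ → ℂ)
    (hγ₁ : ∀ x, γ₁ x = (ε₁ x : ℂ) + I * (σ₁ x : ℂ) / (ω : ℂ))
    (hγ₂ : ∀ x, γ₂ x = (ε₂ x : ℂ) + I * (σ₂ x : ℂ) / (ω : ℂ))
    (hpot1 : ∀ x ∈ Ω,
      (ω : ℂ) ^ 2 * γ₁ x * (μ₁ x : ℂ) + lap (smu μ₁) x / smu μ₁ x =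
      (ω : ℂ) ^ 2 * γ₂ x * (μ₂ x : ℂ) + lap (smu μ₂) x / smu μ₂ x)
    (hpot2 : ∀ x ∈ Ω,
      (ω : ℂ) ^ 2 * γ₁ x * (μ₁ x : ℂ) + lap (sga γ₁) x / sga γ₁ x =
      (ω : ℂ) ^ 2 * γ₂ x * (μ₂ x : ℂ) + lap (sga γ₂) x / sga γ₂ x) :
    ∃ A₁ A₂ B : ℝ × ℝ → Matrix (Fin 2) (Fin 2) ℂ,
      (∀ K : Set (ℝ × ℝ), IsCompact K → K ⊆ Ω →
        ∃ C : ℝ, ∀ x ∈ K, ∀ i j : Fin 2,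
          ‖A₁ x i j‖ ≤ C ∧ ‖A₂ x i j‖ ≤ C ∧ ‖B x i j‖ ≤ C) ∧
      (∀ x ∈ Ω, ∀ i : Fin 2,
        lap (![fun y => smu μ₁ y - smu μ₂ y, fun y => sga γ₁ y - sga γ₂ y] i) x +
        (∑ j : Fin 2,
          (A₁ x i j *
              pd1 (![fun y => smu μ₁ y - smu μ₂ y, fun y => sga γ₁ y - sga γ₂ y] j) x +
           A₂ x i j *
              pd2 (![fun y => smu μ₁ y - smu μ₂ y, fun y => sga γ₁ y - sga γ₂ y] j) x +
           B x i j *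
              (![fun y => smu μ₁ y - smu μ₂ y, fun y => sga γ₁ y - sga γ₂ y] j) x)) = 0) := by
  have hsub : Ω ⊆ closure Ω := subset_closure
  have hmem : ∀ x ∈ Ω, closure Ω ∈ nhds x := fun x hx =>
    Filter.mem_of_superset (hΩ.mem_nhds hx) hsub
  -- smoothness of the four square roots at points of Ω
  have hu₁ : ∀ x ∈ Ω, ContDiffAt ℝ 5 (smu μ₁) x := by
    intro x hx
    have h1 : ContDiffAt ℝ 5 μ₁ x := hμ₁.contDiffAt (hmem x hx)
    have h2 : ContDiffAt ℝ 5 (fun y => Real.sqrt (μ₁ y)) x :=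
      (Real.contDiffAt_sqrt (ne_of_gt (hμ₁pos x (hsub hx)))).comp x h1
    exact Complex.ofRealCLM.contDiff.contDiffAt.comp x h2
  have hu₂ : ∀ x ∈ Ω, ContDiffAt ℝ 5 (smu μ₂) x := by
    intro x hx
    have h1 : ContDiffAt ℝ 5 μ₂ x := hμ₂.contDiffAt (hmem x hx)
    have h2 : ContDiffAt ℝ 5 (fun y => Real.sqrt (μ₂ y)) x :=
      (Real.contDiffAt_sqrt (ne_of_gt (hμ₂pos x (hsub hx)))).comp x h1
    exact Complex.ofRealCLM.contDiff.contDiffAt.comp x h2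
  have hg₁ : ∀ x ∈ Ω, ContDiffAt ℝ 5 γ₁ x := by
    intro x hx
    have h1 : ContDiffAt ℝ 5 ε₁ x := hε₁.contDiffAt (hmem x hx)
    have h2 : ContDiffAt ℝ 5 σ₁ x := hσ₁.contDiffAt (hmem x hx)
    have hfun : γ₁ = fun y => (ε₁ y : ℂ) + I * (σ₁ y : ℂ) / (ω : ℂ) := funext hγ₁
    rw [hfun]
    exact (Complex.ofRealCLM.contDiff.contDiffAt.comp x h1).add
      ((contDiffAt_const.mul (Complex.ofRealCLM.contDiff.contDiffAt.comp x h2)).div_const _)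
  have hg₂ : ∀ x ∈ Ω, ContDiffAt ℝ 5 γ₂ x := by
    intro x hx
    have h1 : ContDiffAt ℝ 5 ε₂ x := hε₂.contDiffAt (hmem x hx)
    have h2 : ContDiffAt ℝ 5 σ₂ x := hσ₂.contDiffAt (hmem x hx)
    have hfun : γ₂ = fun y => (ε₂ y : ℂ) + I * (σ₂ y : ℂ) / (ω : ℂ) := funext hγ₂
    rw [hfun]
    exact (Complex.ofRealCLM.contDiff.contDiffAt.comp x h1).add
      ((contDiffAt_const.mul (Complex.ofRealCLM.contDiff.contDiffAt.comp x h2)).div_const _)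
  have hre₁ : ∀ x ∈ closure Ω, 0 < (γ₁ x).re := by
    intro x hx
    have : γ₁ x = (ε₁ x : ℂ) + ((σ₁ x / ω : ℝ) : ℂ) * I := by rw [hγ₁ x]; push_cast; ring
    rw [this]
    simp [hε₁pos x hx]
  have hre₂ : ∀ x ∈ closure Ω, 0 < (γ₂ x).re := by
    intro x hx
    have : γ₂ x = (ε₂ x : ℂ) + ((σ₂ x / ω : ℝ) : ℂ) * I := by rw [hγ₂ x]; push_cast; ring
    rw [this]
    simp [hε₂pos x hx]
  have hγ₁ne : ∀ x ∈ closure Ω, γ₁ x ≠ 0 := fun x hx h => by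
    simpa [h] using hre₁ x hx
  have hγ₂ne : ∀ x ∈ closure Ω, γ₂ x ≠ 0 := fun x hx h => by
    simpa [h] using hre₂ x hx
  have hv₁ : ∀ x ∈ Ω, ContDiffAt ℝ 5 (sga γ₁) x := by
    intro x hx
    have han : AnalyticAt ℂ (fun z : ℂ => z ^ ((1 : ℂ) / 2)) (γ₁ x) :=
      analyticAt_id.cpow analyticAt_const
        (Complex.mem_slitPlane_iff.mpr (Or.inl (hre₁ x (hsub hx))))
    exact (han.contDiffAt.restrict_scalars ℝ).comp x (hg₁ x hx)
  have hv₂ : ∀ x ∈ Ω, ContDiffAt ℝ 5 (sga γ₂) x := by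
    intro x hx
    have han : AnalyticAt ℂ (fun z : ℂ => z ^ ((1 : ℂ) / 2)) (γ₂ x) :=
      analyticAt_id.cpow analyticAt_const
        (Complex.mem_slitPlane_iff.mpr (Or.inl (hre₂ x (hsub hx))))
    exact (han.contDiffAt.restrict_scalars ℝ).comp x (hg₂ x hx)
  -- nonvanishing and squares
  have hu₁ne : ∀ x ∈ closure Ω, smu μ₁ x ≠ 0 := by
    intro x hx
    simp only [smu, ne_eq, Complex.ofReal_eq_zero]
    exact ne_of_gt (Real.sqrt_pos.mpr (hμ₁pos x hx))
  have hu₂ne : ∀ x ∈ closure Ω, smu μ₂ x ≠ 0 := by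
    intro x hx
    simp only [smu, ne_eq, Complex.ofReal_eq_zero]
    exact ne_of_gt (Real.sqrt_pos.mpr (hμ₂pos x hx))
  have hu₁sq : ∀ x ∈ closure Ω, (smu μ₁ x) ^ 2 = (μ₁ x : ℂ) := by
    intro x hx
    simp only [smu]
    rw [← Complex.ofReal_pow, Real.sq_sqrt (le_of_lt (hμ₁pos x hx))]
  have hu₂sq : ∀ x ∈ closure Ω, (smu μ₂ x) ^ 2 = (μ₂ x : ℂ) := by
    intro x hx
    simp only [smu]
    rw [← Complex.ofReal_pow, Real.sq_sqrt (le_of_lt (hμ₂pos x hx))]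
  have hv₁sq : ∀ x ∈ closure Ω, (sga γ₁ x) ^ 2 = γ₁ x := by
    intro x hx
    simp only [sga]
    rw [sq, ← Complex.cpow_add _ _ (hγ₁ne x hx)]
    norm_num
  have hv₂sq : ∀ x ∈ closure Ω, (sga γ₂ x) ^ 2 = γ₂ x := by
    intro x hx
    simp only [sga]
    rw [sq, ← Complex.cpow_add _ _ (hγ₂ne x hx)]
    norm_num
  have hv₁ne : ∀ x ∈ closure Ω, sga γ₁ x ≠ 0 := fun x hx h =>
    hγ₁ne x hx (by rw [← hv₁sq x hx, h]; ring)
  have hv₂ne : ∀ x ∈ closure Ω, sga γ₂ x ≠ 0 := fun x hx h =>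
    hγ₂ne x hx (by rw [← hv₂sq x hx, h]; ring)
  refine ⟨fun _ => 0, fun _ => 0,
    fun x => !![(ω : ℂ) ^ 2 * (sga γ₁ x) ^ 2 *
                  ((smu μ₁ x) ^ 2 + smu μ₁ x * smu μ₂ x + (smu μ₂ x) ^ 2) -
                  ((ω : ℂ) ^ 2 * γ₂ x * (μ₂ x : ℂ) + lap (smu μ₂) x / smu μ₂ x),
                (ω : ℂ) ^ 2 * (smu μ₂ x) ^ 3 * (sga γ₁ x + sga γ₂ x);
                (ω : ℂ) ^ 2 * (sga γ₂ x) ^ 3 * (smu μ₁ x + smu μ₂ x),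
                (ω : ℂ) ^ 2 * (smu μ₁ x) ^ 2 *
                  ((sga γ₁ x) ^ 2 + sga γ₁ x * sga γ₂ x + (sga γ₂ x) ^ 2) -
                  ((ω : ℂ) ^ 2 * γ₂ x * (μ₂ x : ℂ) + lap (sga γ₂) x / sga γ₂ x)],
    ?_, ?_⟩
  · -- local boundedness
    intro K hK hKΩ
    have c00 : ContinuousOn (fun x => (ω : ℂ) ^ 2 * (sga γ₁ x) ^ 2 *
        ((smu μ₁ x) ^ 2 + smu μ₁ x * smu μ₂ x + (smu μ₂ x) ^ 2) -
        ((ω : ℂ) ^ 2 * γ₂ x * (μ₂ x : ℂ) + lap (smu μ₂) x / smu μ₂ x)) Ω := by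
      intro x hx
      apply ContinuousAt.continuousWithinAt
      have hcu1 := (hu₁ x hx).continuousAt
      have hcu2 := (hu₂ x hx).continuousAt
      have hcv1 := (hv₁ x hx).continuousAt
      have hcg2 := (hg₂ x hx).continuousAt
      have hcm2 : ContinuousAt (fun y => ((μ₂ y : ℝ) : ℂ)) x :=
        Complex.continuous_ofReal.continuousAt.comp (hμ₂.contDiffAt (hmem x hx)).continuousAt
      have hcl2 := continuousAt_lap (hu₂ x hx)
      exact ((continuousAt_const.mul (hcv1.pow 2)).mul
          (((hcu1.pow 2).add (hcu1.mul hcu2)).add (hcu2.pow 2))).sub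
        (((continuousAt_const.mul hcg2).mul hcm2).add (hcl2.div hcu2 (hu₂ne x (hsub hx))))
    have c01 : ContinuousOn (fun x => (ω : ℂ) ^ 2 * (smu μ₂ x) ^ 3 *
        (sga γ₁ x + sga γ₂ x)) Ω := by
      intro x hx
      apply ContinuousAt.continuousWithinAt
      exact (continuousAt_const.mul ((hu₂ x hx).continuousAt.pow 3)).mul
        ((hv₁ x hx).continuousAt.add (hv₂ x hx).continuousAt)
    have c10 : ContinuousOn (fun x => (ω : ℂ) ^ 2 * (sga γ₂ x) ^ 3 *
        (smu μ₁ x + smu μ₂ x)) Ω := by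
      intro x hx
      apply ContinuousAt.continuousWithinAt
      exact (continuousAt_const.mul ((hv₂ x hx).continuousAt.pow 3)).mul
        ((hu₁ x hx).continuousAt.add (hu₂ x hx).continuousAt)
    have c11 : ContinuousOn (fun x => (ω : ℂ) ^ 2 * (smu μ₁ x) ^ 2 *
        ((sga γ₁ x) ^ 2 + sga γ₁ x * sga γ₂ x + (sga γ₂ x) ^ 2) -
        ((ω : ℂ) ^ 2 * γ₂ x * (μ₂ x : ℂ) + lap (sga γ₂) x / sga γ₂ x)) Ω := by
      intro x hx
      apply ContinuousAt.continuousWithinAt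
      have hcu1 := (hu₁ x hx).continuousAt
      have hcv1 := (hv₁ x hx).continuousAt
      have hcv2 := (hv₂ x hx).continuousAt
      have hcg2 := (hg₂ x hx).continuousAt
      have hcm2 : ContinuousAt (fun y => ((μ₂ y : ℝ) : ℂ)) x :=
        Complex.continuous_ofReal.continuousAt.comp (hμ₂.contDiffAt (hmem x hx)).continuousAt
      have hcl2 := continuousAt_lap (hv₂ x hx)
      exact ((continuousAt_const.mul (hcu1.pow 2)).mul
          (((hcv1.pow 2).add (hcv1.mul hcv2)).add (hcv2.pow 2))).sub
        (((continuousAt_const.mul hcg2).mul hcm2).add (hcl2.div hcv2 (hv₂ne x (hsub hx))))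
    obtain ⟨C1, hC1⟩ := hK.exists_bound_of_continuousOn (c00.mono hKΩ)
    obtain ⟨C2, hC2⟩ := hK.exists_bound_of_continuousOn (c01.mono hKΩ)
    obtain ⟨C3, hC3⟩ := hK.exists_bound_of_continuousOn (c10.mono hKΩ)
    obtain ⟨C4, hC4⟩ := hK.exists_bound_of_continuousOn (c11.mono hKΩ)
    refine ⟨max 0 (max (max C1 C2) (max C3 C4)), ?_⟩
    intro x hx i j
    refine ⟨by simp, by simp, ?_⟩
    fin_cases i <;> fin_cases j <;>
      simp only [Matrix.cons_val', Matrix.cons_val_zero, Matrix.cons_val_one,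
        Matrix.head_cons, Matrix.head_fin_const, Matrix.of_apply, Matrix.empty_val',
        Matrix.cons_val_fin_one, Fin.mk_zero, Fin.mk_one]
    · exact le_trans (hC1 x hx) (le_max_of_le_right (le_max_of_le_left (le_max_left _ _)))
    · exact le_trans (hC2 x hx) (le_max_of_le_right (le_max_of_le_left (le_max_right _ _)))
    · exact le_trans (hC3 x hx) (le_max_of_le_right (le_max_of_le_right (le_max_left _ _)))
    · exact le_trans (hC4 x hx) (le_max_of_le_right (le_max_of_le_right (le_max_right _ _)))
  · -- the elliptic system
    intro x hx i
    have hls0 : lap (fun y => smu μ₁ y - smu μ₂ y) x = lap (smu μ₁) x - lap (smu μ₂) x :=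
      lap_sub (hu₁ x hx) (hu₂ x hx)
    have hls1 : lap (fun y => sga γ₁ y - sga γ₂ y) x = lap (sga γ₁) x - lap (sga γ₂) x :=
      lap_sub (hv₁ x hx) (hv₂ x hx)
    have ha := hu₁ne x (hsub hx)
    have hb := hu₂ne x (hsub hx)
    have hc := hv₁ne x (hsub hx)
    have hd := hv₂ne x (hsub hx)
    have ha2 := hu₁sq x (hsub hx)
    have hb2 := hu₂sq x (hsub hx)
    have hc2 := hv₁sq x (hsub hx)
    have hd2 := hv₂sq x (hsub hx)
    fin_cases i
    · have hp := hpot1 x hx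
      rw [← ha2, ← hb2, ← hc2, ← hd2] at hp
      have hp' : lap (smu μ₁) x * smu μ₂ x +
          (ω : ℂ) ^ 2 * (sga γ₁ x) ^ 2 * (smu μ₁ x) ^ 2 * (smu μ₁ x * smu μ₂ x) =
          lap (smu μ₂) x * smu μ₁ x +
          (ω : ℂ) ^ 2 * (sga γ₂ x) ^ 2 * (smu μ₂ x) ^ 2 * (smu μ₁ x * smu μ₂ x) := by
        field_simp at hp
        linear_combination hp
      simp only [Fin.isValue, Matrix.cons_val_zero, Matrix.cons_val_one, Matrix.head_cons,
        Fin.sum_univ_two, Matrix.zero_apply, zero_mul, zero_add,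
        Matrix.cons_val', Matrix.head_fin_const, Matrix.of_apply, Matrix.empty_val',
        Matrix.cons_val_fin_one, Fin.mk_zero]
      rw [hls0, ← hb2, ← hd2]
      field_simp
      linear_combination hp'
    · have hp := hpot2 x hx
      rw [← ha2, ← hb2, ← hc2, ← hd2] at hp
      have hp' : lap (sga γ₁) x * sga γ₂ x +
          (ω : ℂ) ^ 2 * (sga γ₁ x) ^ 2 * (smu μ₁ x) ^ 2 * (sga γ₁ x * sga γ₂ x) =
          lap (sga γ₂) x * sga γ₁ x +
          (ω : ℂ) ^ 2 * (sga γ₂ x) ^ 2 * (smu μ₂ x) ^ 2 * (sga γ₁ x * sga γ₂ x) := by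
        field_simp at hp
        linear_combination hp
      simp only [Fin.isValue, Matrix.cons_val_zero, Matrix.cons_val_one, Matrix.head_cons,
        Fin.sum_univ_two, Matrix.zero_apply, zero_mul, zero_add,
        Matrix.cons_val', Matrix.head_fin_const, Matrix.of_apply, Matrix.empty_val',
        Matrix.cons_val_fin_one, Fin.mk_one]
      rw [hls1, ← hb2, ← hd2]
      field_simp
      linear_combination hp'
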